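/- Harnack inequality implies irreducibility of a Markov kernel (argument in the proof of Theorem 2.3(2)): Let (E, d) be a metric space with its Borel σ-algebra, let κ be a Markov kernel from E to E, and let μ be a probability measure on E that is invariant for κ, i.e. ∫_E κ(x)(B) dμ(x) = μ(B) for every Borel set B. Suppose there is a constant c > 0 such that the Harnack inequality (∫_E f dκ(η))² ≤ (∫_E f² dκ(ξ)) · e^{c·d(ξ,η)²} holds for all bounded measurable f : E → [0,∞) and all ξ, η ∈ E. Then for every Borel set B with μ(B) > 0 one has κ(ξ)(B) > 0 for every ξ ∈ E; consequently κ is μ-irreducible, i.e. ∫_A κ(ξ)(B) dμ(ξ) > 0 whenever A and B are Borel sets with μ(A) > 0 and μ(B) > 0. -/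

import Mathlib

open MeasureTheory ProbabilityTheory
open scoped ENNReal

/-- **Harnack inequality implies irreducibility of a Markov kernel** (argument in
the proof of Theorem 2.3(2) of the paper). If a Markov kernel `κ` with invariant
probability measure `μ` satisfies the Harnack inequality
`(∫ f dκ(η))² ≤ (∫ f² dκ(ξ)) e^{c d(ξ,η)²}` for all bounded measurable `f ≥ 0`,
then `κ(ξ)(B) > 0` whenever `μ(B) > 0`, and consequently `κ` is `μ`-irreducible. -/
theorem harnack_implies_irreducible
    {E : Type*} [MetricSpace E] [MeasurableSpace E] [BorelSpace E]
    (κ : Kernel E E) [IsMarkovKernel κ]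
    (μ : Measure E) [IsProbabilityMeasure μ]
    (hinv : ∀ B : Set E, MeasurableSet B → ∫⁻ x, κ x B ∂μ = μ B)
    (c : ℝ) (hc : 0 < c)
    (harnack : ∀ f : E → ℝ, Measurable f → (∀ x, 0 ≤ f x) → (∃ M : ℝ, ∀ x, f x ≤ M) →
      ∀ ξ η : E,
        (∫ x, f x ∂(κ η)) ^ 2 ≤
          (∫ x, f x ^ 2 ∂(κ ξ)) * Real.exp (c * dist ξ η ^ 2)) :
    (∀ B : Set E, MeasurableSet B → 0 < μ B → ∀ ξ : E, 0 < κ ξ B) ∧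
    (∀ A B : Set E, MeasurableSet A → MeasurableSet B → 0 < μ A → 0 < μ B →
      0 < ∫⁻ ξ in A, κ ξ B ∂μ) := by
  have main : ∀ B : Set E, MeasurableSet B → 0 < μ B → ∀ ξ : E, 0 < κ ξ B := by
    intro B hB hμB ξ
    -- there exists η with κ η B > 0
    obtain ⟨η, hη⟩ : ∃ η : E, 0 < κ η B := by
      by_contra h
      push_neg at h
      have h0 : ∀ x : E, κ x B = 0 := fun x => le_antisymm (h x) bot_le
      have : μ B = 0 := by
        rw [← hinv B hB]
        simp [h0]
      exact absurd this hμB.ne'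
    -- apply Harnack to the indicator of B
    set f : E → ℝ := B.indicator (fun _ => (1 : ℝ)) with hf
    have hfm : Measurable f := (measurable_const.indicator hB)
    have hf0 : ∀ x, 0 ≤ f x := fun x => Set.indicator_nonneg (fun _ _ => zero_le_one) x
    have hfbd : ∃ M : ℝ, ∀ x, f x ≤ M :=
      ⟨1, fun x => Set.indicator_le_self' (fun _ _ => zero_le_one) x⟩
    have hsq : ∀ x, f x ^ 2 = f x := by
      intro x
      by_cases hx : x ∈ B <;> simp [hf, hx]
    have key := harnack f hfm hf0 hfbd ξ η
    have hint : ∀ ζ : E, ∫ x, f x ∂(κ ζ) = (κ ζ B).toReal := by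
      intro ζ
      have := integral_indicator_one (μ := κ ζ) hB
      simp only [measureReal_def] at this
      exact this
    rw [show (fun x => f x ^ 2) = f from funext hsq] at key
    rw [hint, hint] at key
    have hηpos : 0 < (κ η B).toReal :=
      ENNReal.toReal_pos hη.ne' (measure_ne_top _ _)
    have hξpos : 0 < (κ ξ B).toReal := by
      by_contra hcon
      push_neg at hcon
      have : (κ ξ B).toReal = 0 := le_antisymm hcon ENNReal.toReal_nonneg
      rw [this, zero_mul] at key
      exact absurd key (not_le.mpr (pow_pos hηpos 2))
    exact ENNReal.toReal_pos_iff.mp hξpos |>.1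
  refine ⟨main, fun A B hA hB hμA hμB => ?_⟩
  by_contra h
  push_neg at h
  have h0 : ∫⁻ ξ in A, κ ξ B ∂μ = 0 := le_antisymm h bot_le
  have hmeas : Measurable fun ξ => κ ξ B := κ.measurable_coe hB
  rw [lintegral_eq_zero_iff hmeas] at h0
  have hA0 : μ.restrict A Set.univ = 0 := by
    have hae : ∀ᵐ ξ ∂(μ.restrict A), False := by
      filter_upwards [h0] with ξ hξ
      exact absurd hξ (main B hB hμB ξ).ne'
    simpa using hae
  rw [Measure.restrict_apply_univ] at hA0
  exact absurd hA0 hμA.ne'
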